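/- Let μ₀ be a probability measure on ℝ supported on (−∞, w] with w < ∞ and μ₀({w}) > 0. With μ_β the exponential tilt dμ_β = e^{βx}/M(β) dμ₀, one has lim_{β→∞} h(μ_β | μ₀) = log(1/μ₀({w})). -/

import Mathlib

open MeasureTheory Filter Real Set
open scoped ENNReal NNReal Topology

lemma aux_abs_mul_exp_le {t : ℝ} (ht : t ≤ 0) : |t * Real.exp t| ≤ Real.exp (-1) := by
  have h1 : -t ≤ Real.exp (-t - 1) := by
    have := Real.add_one_le_exp (-t - 1); linarith
  have h2 : (-t) * Real.exp t ≤ Real.exp (-t - 1) * Real.exp t :=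
    mul_le_mul_of_nonneg_right h1 (Real.exp_pos t).le
  rw [← Real.exp_add] at h2
  have habs : |t * Real.exp t| = (-t) * Real.exp t := by
    rw [abs_of_nonpos (mul_nonpos_of_nonpos_of_nonneg ht (Real.exp_pos t).le)]; ring
  rw [habs]
  calc (-t) * Real.exp t ≤ Real.exp (-t - 1 + t) := h2
    _ = Real.exp (-1) := by rw [(by ring : -t - 1 + t = (-1:ℝ))]

lemma aux_tendsto_mul_exp_atBot : Tendsto (fun t : ℝ => t * Real.exp t) atBot (𝓝 0) := by
  have h := (tendsto_pow_mul_exp_neg_atTop_nhds_zero 1).neg.comp tendsto_neg_atBot_atTop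
  simp only [Function.comp, pow_one, neg_neg, neg_zero] at h
  convert h using 2 with t
  simp [Function.comp, neg_neg]


open Classical in
/-- Relative entropy `h(μ | ν) = ∫ log(dμ/dν) dμ` when `μ ≪ ν` (and the integral exists),
and `+∞` otherwise. -/
noncomputable def relEnt {α : Type*} [MeasurableSpace α] (μ ν : Measure α) : ℝ≥0∞ :=
  if μ ≪ ν ∧ Integrable (llr μ ν) μ then ENNReal.ofReal (∫ x, llr μ ν x ∂μ) else ⊤

/-- Let `μ₀` be a probability measure on `ℝ` supported on `(−∞, w]` with
`w < ∞` and `μ₀({w}) > 0`, whose m.g.f. is finite everywhere. With `μ_β` the exponential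
tilt `dμ_β = e^{βx}/M(β) dμ₀`, one has `lim_{β→∞} h(μ_β | μ₀) = log (1/μ₀({w}))`. -/
theorem stmt4 (μ₀ : Measure ℝ) [IsProbabilityMeasure μ₀]
    (hM : ∀ lam : ℝ, Integrable (fun x => Real.exp (lam * x)) μ₀)
    (w : ℝ) (hw : μ₀ {w} ≠ 0) (hsupp : μ₀ (Set.Ioi w) = 0) :
    Tendsto (fun β : ℝ => (relEnt (μ₀.tilted (fun x => β * x)) μ₀).toReal)
      atTop (𝓝 (Real.log (1 / (μ₀ {w}).toReal))) := by
  classical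
  set c : ℝ := (μ₀ {w}).toReal with hc_def
  have hc0 : 0 < c := ENNReal.toReal_pos hw (measure_ne_top μ₀ _)
  have hc1 : c ≤ 1 := by
    rw [hc_def]
    exact ENNReal.toReal_le_of_le_ofReal zero_le_one (by simpa using prob_le_one (μ := μ₀) (s := {w}))
  have hae : ∀ᵐ x ∂μ₀, x ≤ w := by
    rw [ae_iff]
    convert hsupp using 2
    ext x; simp [not_le]
  -- basic integrabilities
  have hI1 : ∀ β : ℝ, Integrable (fun x => Real.exp (β * (x - w))) μ₀ := by
    intro β
    have h := (hM β).const_mul (Real.exp (-(β * w)))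
    refine h.congr (Filter.Eventually.of_forall fun x => ?_)
    show Real.exp (-(β * w)) * Real.exp (β * x) = Real.exp (β * (x - w))
    rw [← Real.exp_add]; congr 1; ring
  have hIx : ∀ β : ℝ, Integrable (fun x => x * Real.exp (β * x)) μ₀ := by
    intro β
    refine ((hM (β + 1)).add (hM (β - 1))).mono' ?_ ?_
    · exact (measurable_id.mul (Real.measurable_exp.comp
        (measurable_const.mul measurable_id))).aestronglyMeasurable
    · refine Filter.Eventually.of_forall fun x => ?_
      have habs : |x| ≤ Real.exp x + Real.exp (-x) := by
        rcases le_total 0 x with h | h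
        · rw [abs_of_nonneg h]
          have := Real.add_one_le_exp x
          have := Real.exp_pos (-x)
          linarith
        · rw [abs_of_nonpos h]
          have := Real.add_one_le_exp (-x)
          have := Real.exp_pos x
          linarith
      have : ‖x * Real.exp (β * x)‖ = |x| * Real.exp (β * x) := by
        rw [norm_eq_abs, abs_mul, abs_of_pos (Real.exp_pos _)]
      rw [this]
      calc |x| * Real.exp (β * x) ≤ (Real.exp x + Real.exp (-x)) * Real.exp (β * x) :=
            mul_le_mul_of_nonneg_right habs (Real.exp_pos _).le
        _ = Real.exp ((β + 1) * x) + Real.exp ((β - 1) * x) := by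
            rw [add_mul, ← Real.exp_add, ← Real.exp_add]; ring_nf
  have hIg : ∀ β : ℝ, Integrable (fun x => (β * (x - w)) * Real.exp (β * (x - w))) μ₀ := by
    intro β
    have h := ((hIx β).const_mul (β * Real.exp (-(β * w)))).sub
      ((hM β).const_mul ((β * w) * Real.exp (-(β * w))))
    refine h.congr (Filter.Eventually.of_forall fun x => ?_)
    have he : Real.exp (β * (x - w)) = Real.exp (-(β * w)) * Real.exp (β * x) := by
      rw [← Real.exp_add]; congr 1; ring
    simp only [Pi.sub_apply]
    rw [he]; ring
  -- notation
  set M : ℝ → ℝ := fun β => ∫ x, Real.exp (β * x) ∂μ₀ with hM_def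
  set D : ℝ → ℝ := fun β => ∫ x, Real.exp (β * (x - w)) ∂μ₀ with hD_def
  set g : ℝ → ℝ := fun β => ∫ x, (β * (x - w)) * Real.exp (β * (x - w)) ∂μ₀ with hg_def
  have hM0 : ∀ β, 0 < M β := fun β => integral_exp_pos (hM β)
  have hD0 : ∀ β, 0 < D β := fun β => integral_exp_pos (hI1 β)
  have hMD : ∀ β, M β = Real.exp (β * w) * D β := by
    intro β
    rw [hM_def, hD_def]
    simp only
    rw [← integral_const_mul]
    refine integral_congr_ae (Filter.Eventually.of_forall fun x => ?_)
    show Real.exp (β * x) = Real.exp (β * w) * Real.exp (β * (x - w))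
    rw [← Real.exp_add]; congr 1; ring
  -- the value of relEnt for each β
  have hval : ∀ β : ℝ, (relEnt (μ₀.tilted (fun x => β * x)) μ₀).toReal
      = max (g β / D β - Real.log (D β)) 0 := by
    intro β
    have hprob : IsProbabilityMeasure (μ₀.tilted (fun x => β * x)) :=
      isProbabilityMeasure_tilted (hM β)
    have hac : μ₀.tilted (fun x => β * x) ≪ μ₀ := tilted_absolutelyContinuous μ₀ _
    have hllr : llr (μ₀.tilted (fun x => β * x)) μ₀ =ᵐ[μ₀]
        fun x => β * x - Real.log (M β) := log_rnDeriv_tilted_left_self (hM β)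
    have hllrβ : llr (μ₀.tilted (fun x => β * x)) μ₀ =ᵐ[μ₀.tilted (fun x => β * x)]
        fun x => β * x - Real.log (M β) := hac.ae_le hllr
    -- integrability of the linear function wrt tilted measure
    have hint : Integrable (fun x => β * x - Real.log (M β)) (μ₀.tilted (fun x => β * x)) := by
      rw [Measure.tilted]
      rw [integrable_withDensity_iff]
      · refine (((hIx β).const_mul (β / M β)).sub
          ((hM β).const_mul (Real.log (M β) / M β))).congr
          (Filter.Eventually.of_forall fun x => ?_)
        simp only [Pi.sub_apply]
        rw [ENNReal.toReal_ofReal (div_nonneg (Real.exp_pos _).le (hM0 β).le)]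
        field_simp
      · exact ENNReal.measurable_ofReal.comp
          ((Real.measurable_exp.comp (measurable_const.mul measurable_id)).div_const _)
      · exact Filter.Eventually.of_forall fun x => ENNReal.ofReal_lt_top
    have hillr : Integrable (llr (μ₀.tilted (fun x => β * x)) μ₀) (μ₀.tilted (fun x => β * x)) :=
      (integrable_congr hllrβ).mpr hint
    have hrel : relEnt (μ₀.tilted (fun x => β * x)) μ₀
        = ENNReal.ofReal (∫ x, llr (μ₀.tilted (fun x => β * x)) μ₀ x ∂(μ₀.tilted (fun x => β * x))) := by
      rw [relEnt, if_pos ⟨hac, hillr⟩]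
    -- compute the integral
    have hHeq : ∫ x, llr (μ₀.tilted (fun x => β * x)) μ₀ x ∂(μ₀.tilted (fun x => β * x))
        = g β / D β - Real.log (D β) := by
      rw [integral_congr_ae hllrβ]
      have h1 : Integrable (fun x : ℝ => β * x) (μ₀.tilted (fun x => β * x)) := by
        have := hint.add (integrable_const (Real.log (M β)))
        refine this.congr (Filter.Eventually.of_forall fun x => ?_)
        simp only [Pi.add_apply]; ring
      rw [integral_sub h1 (integrable_const _), integral_const, probReal_univ]
      simp only [ENNReal.toReal_one, smul_eq_mul, one_mul]
      have h2 : ∫ x, β * x ∂(μ₀.tilted (fun x => β * x))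
          = ∫ x, (Real.exp (β * x) / M β) • (β * x) ∂μ₀ := integral_tilted _ _
      have h3 : ∫ x, (Real.exp (β * x) / M β) • (β * x) ∂μ₀
          = (1 / M β) * ∫ x, (β * x) * Real.exp (β * x) ∂μ₀ := by
        rw [← integral_const_mul]
        refine integral_congr_ae (Filter.Eventually.of_forall fun x => ?_)
        show (Real.exp (β * x) / M β) • (β * x) = 1 / M β * ((β * x) * Real.exp (β * x))
        rw [smul_eq_mul]; ring
      have h4 : ∫ x, (β * x) * Real.exp (β * x) ∂μ₀
          = Real.exp (β * w) * g β + (β * w) * M β := by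
        have hpt : ∀ x : ℝ, (β * x) * Real.exp (β * x)
            = Real.exp (β * w) * ((β * (x - w)) * Real.exp (β * (x - w)))
              + (β * w) * Real.exp (β * x) := by
          intro x
          have he : Real.exp (β * x) = Real.exp (β * w) * Real.exp (β * (x - w)) := by
            rw [← Real.exp_add]; ring_nf
          rw [he]; ring
        calc ∫ x, (β * x) * Real.exp (β * x) ∂μ₀
            = ∫ x, (Real.exp (β * w) * ((β * (x - w)) * Real.exp (β * (x - w)))
              + (β * w) * Real.exp (β * x)) ∂μ₀ :=
              integral_congr_ae (Filter.Eventually.of_forall fun x => hpt x)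
          _ = Real.exp (β * w) * g β + (β * w) * M β := by
              rw [integral_add ((hIg β).const_mul _) ((hM β).const_mul _),
                integral_const_mul, integral_const_mul]
      have hlogM : Real.log (M β) = β * w + Real.log (D β) := by
        rw [hMD β, Real.log_mul (Real.exp_pos _).ne' (hD0 β).ne', Real.log_exp]
      rw [h2, h3, h4, hlogM, hMD β]
      field_simp [(Real.exp_pos (β * w)).ne', (hD0 β).ne']
      ring
    rw [hrel, hHeq]
    rcases le_total (g β / D β - Real.log (D β)) 0 with h | h
    · rw [ENNReal.ofReal_eq_zero.mpr h, max_eq_right h]; simp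
    · rw [ENNReal.toReal_ofReal h, max_eq_left h]
  -- limits
  have hD_lim : Tendsto D atTop (𝓝 c) := by
    have hc_int : c = ∫ x, Set.indicator {w} (fun _ => (1:ℝ)) x ∂μ₀ := by
      rw [integral_indicator_const (1:ℝ) (measurableSet_singleton w)]
      simp [hc_def]; rfl
    rw [hc_int]
    refine tendsto_integral_filter_of_dominated_convergence (fun _ => 1) ?_ ?_ (integrable_const 1) ?_
    · exact Filter.Eventually.of_forall fun β =>
        (Real.measurable_exp.comp ((measurable_id.sub measurable_const).const_mul β)).aestronglyMeasurable
    · filter_upwards [eventually_ge_atTop (0:ℝ)] with β hβ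
      filter_upwards [hae] with x hx
      rw [norm_eq_abs, abs_of_pos (Real.exp_pos _)]
      calc Real.exp (β * (x - w)) ≤ Real.exp 0 :=
            Real.exp_le_exp.mpr (mul_nonpos_of_nonneg_of_nonpos hβ (by linarith))
        _ = 1 := Real.exp_zero
    · filter_upwards [hae] with x hx
      rcases eq_or_lt_of_le hx with rfl | hlt
      · simp only [sub_self, mul_zero, Real.exp_zero]
        have : Set.indicator {x} (fun _ => (1:ℝ)) x = 1 := by simp
        rw [this]; exact tendsto_const_nhds
      · have : Set.indicator {w} (fun _ => (1:ℝ)) x = 0 := by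
          simp [Set.indicator_of_notMem, ne_of_lt hlt]
        rw [this]
        have hb : Tendsto (fun β : ℝ => β * (x - w)) atTop atBot :=
          (tendsto_mul_const_atBot_of_neg (by linarith)).mpr tendsto_id
        exact Real.tendsto_exp_atBot.comp hb
  have hg_lim : Tendsto g atTop (𝓝 0) := by
    have h0 : (0:ℝ) = ∫ _x, (0:ℝ) ∂μ₀ := by simp
    rw [h0]
    refine tendsto_integral_filter_of_dominated_convergence (fun _ => Real.exp (-1)) ?_ ?_
      (integrable_const _) ?_
    · refine Filter.Eventually.of_forall fun β => ?_
      exact (((measurable_id.sub measurable_const).const_mul β).mul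
        (Real.measurable_exp.comp ((measurable_id.sub measurable_const).const_mul β))).aestronglyMeasurable
    · filter_upwards [eventually_ge_atTop (0:ℝ)] with β hβ
      filter_upwards [hae] with x hx
      rw [norm_eq_abs]
      exact aux_abs_mul_exp_le (mul_nonpos_of_nonneg_of_nonpos hβ (by linarith))
    · filter_upwards [hae] with x hx
      rcases eq_or_lt_of_le hx with rfl | hlt
      · simp only [sub_self, mul_zero, zero_mul]
        exact tendsto_const_nhds
      · have hb : Tendsto (fun β : ℝ => β * (x - w)) atTop atBot :=
          (tendsto_mul_const_atBot_of_neg (by linarith)).mpr tendsto_id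
        exact aux_tendsto_mul_exp_atBot.comp hb
  have hH_lim : Tendsto (fun β => g β / D β - Real.log (D β)) atTop (𝓝 (-Real.log c)) := by
    have h1 : Tendsto (fun β => g β / D β) atTop (𝓝 0) := by
      have := hg_lim.div hD_lim hc0.ne'
      rwa [zero_div] at this
    have h2 : Tendsto (fun β => Real.log (D β)) atTop (𝓝 (Real.log c)) :=
      ((Real.continuousAt_log hc0.ne').tendsto).comp hD_lim
    have := h1.sub h2
    simpa using this
  have hfinal : Tendsto (fun β => max (g β / D β - Real.log (D β)) 0) atTop
      (𝓝 (Real.log (1 / c))) := by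
    have hmax : Tendsto (fun β => max (g β / D β - Real.log (D β)) 0) atTop
        (𝓝 (max (-Real.log c) 0)) := hH_lim.max tendsto_const_nhds
    have : max (-Real.log c) 0 = Real.log (1 / c) := by
      rw [max_eq_left (neg_nonneg.mpr (Real.log_nonpos hc0.le hc1)), one_div, Real.log_inv]
    rwa [this] at hmax
  refine Tendsto.congr (fun β => (hval β).symm) hfinal
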